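/- In a free Boolean algebra on generators {x_η : η ∈ T}, suppose x = ⋂_{ℓ<n} τ_ℓ ∩ ⋂_{ℓ<m} σ_ℓ is nonzero, where each τ_ℓ lies in the subalgebra A generated by {x_η : η ∈ S} for some S ⊆ T, and each σ_ℓ ∈ {x_{ν_ℓ}, 1 − x_{ν_ℓ}} with ν₀,…,ν_{m−1} ∈ T∖S distinct. Then pr_A(x) = ⋂_{ℓ<n} τ_ℓ, where pr_A(x) is the least element of the completion of A above x. -/
import Mathlib


variable {T B : Type*} [CompleteBooleanAlgebra B]

def Indep (x : T → B) : Prop :=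
  ∀ F G : Finset T, Disjoint F G →
    F.inf x ⊓ G.inf (fun η => (x η)ᶜ) ≠ ⊥

def subalgClosure (s : Set B) : Set B :=
  ⋂₀ {S | s ⊆ S ∧ ⊥ ∈ S ∧ (∀ a ∈ S, ∀ b ∈ S, a ⊔ b ∈ S) ∧ (∀ a ∈ S, aᶜ ∈ S)}

def cSubalgClosure (s : Set B) : Set B :=
  ⋂₀ {S | s ⊆ S ∧ (∀ t : Set B, t ⊆ S → sSup t ∈ S) ∧ (∀ a ∈ S, aᶜ ∈ S)}

def prj (A : Set B) (x : B) : B := sInf {a ∈ A | x ≤ a}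

namespace Proj

lemma sc_subset {s : Set B} {S' : Set B}
    (h : s ⊆ S' ∧ ⊥ ∈ S' ∧ (∀ a ∈ S', ∀ b ∈ S', a ⊔ b ∈ S') ∧ (∀ a ∈ S', aᶜ ∈ S')) :
    subalgClosure s ⊆ S' := fun _ ha => ha S' h

lemma sc_gen {s : Set B} {a : B} (ha : a ∈ s) : a ∈ subalgClosure s :=
  fun _ hS => hS.1 ha

lemma sc_bot {s : Set B} : (⊥ : B) ∈ subalgClosure s := fun _ hS => hS.2.1

lemma sc_sup {s : Set B} {a b : B} (ha : a ∈ subalgClosure s) (hb : b ∈ subalgClosure s) :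
    a ⊔ b ∈ subalgClosure s := fun S hS => hS.2.2.1 a (ha S hS) b (hb S hS)

lemma sc_compl {s : Set B} {a : B} (ha : a ∈ subalgClosure s) :
    aᶜ ∈ subalgClosure s := fun S hS => hS.2.2.2 a (ha S hS)

lemma sc_top {s : Set B} : (⊤ : B) ∈ subalgClosure s := by
  have := sc_compl (sc_bot (s := s)); simpa using this

lemma sc_inf {s : Set B} {a b : B} (ha : a ∈ subalgClosure s) (hb : b ∈ subalgClosure s) :
    a ⊓ b ∈ subalgClosure s := by
  have := sc_compl (sc_sup (sc_compl ha) (sc_compl hb)); simpa using this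

lemma sc_mono {s t : Set B} (h : s ⊆ t) : subalgClosure s ⊆ subalgClosure t :=
  sc_subset ⟨fun a ha => sc_gen (h ha), sc_bot, fun _ ha _ hb => sc_sup ha hb,
    fun _ ha => sc_compl ha⟩

lemma sc_finset_inf {s : Set B} {ι : Type*} (F : Finset ι) (f : ι → B)
    (hf : ∀ i ∈ F, f i ∈ subalgClosure s) : F.inf f ∈ subalgClosure s := by
  classical
  induction F using Finset.induction_on with
  | empty => simpa using sc_top
  | @insert i F hni ih =>
    rw [Finset.inf_insert]
    exact sc_inf (hf i (Finset.mem_insert_self i F))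
      (ih fun j hj => hf j (Finset.mem_insert_of_mem hj))

lemma csc_subset {s : Set B} {S' : Set B}
    (h : s ⊆ S' ∧ (∀ t : Set B, t ⊆ S' → sSup t ∈ S') ∧ (∀ a ∈ S', aᶜ ∈ S')) :
    cSubalgClosure s ⊆ S' := fun _ ha => ha S' h

lemma csc_gen {s : Set B} {a : B} (ha : a ∈ s) : a ∈ cSubalgClosure s :=
  fun _ hS => hS.1 ha

lemma csc_sSup {s : Set B} {t : Set B} (ht : t ⊆ cSubalgClosure s) :
    sSup t ∈ cSubalgClosure s := fun S hS =>
  hS.2.1 t (fun a ha => ht ha S hS)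

lemma csc_compl {s : Set B} {a : B} (ha : a ∈ cSubalgClosure s) :
    aᶜ ∈ cSubalgClosure s := fun S hS => hS.2.2 a (ha S hS)

lemma csc_bot {s : Set B} : (⊥ : B) ∈ cSubalgClosure s := by
  have := csc_sSup (s := s) (t := ∅) (by simp)
  simpa using this

lemma csc_sup {s : Set B} {a b : B} (ha : a ∈ cSubalgClosure s) (hb : b ∈ cSubalgClosure s) :
    a ⊔ b ∈ cSubalgClosure s := by
  have := csc_sSup (s := s) (t := {a, b}) (by
    intro c hc; rcases hc with rfl | hc
    · exact ha
    · simp at hc; subst hc; exact hb)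
  simpa [sSup_pair] using this

lemma csc_inf {s : Set B} {a b : B} (ha : a ∈ cSubalgClosure s) (hb : b ∈ cSubalgClosure s) :
    a ⊓ b ∈ cSubalgClosure s := by
  have := csc_compl (csc_sup (csc_compl ha) (csc_compl hb)); simpa using this

lemma sc_subset_csc {s : Set B} : subalgClosure s ⊆ cSubalgClosure s :=
  sc_subset ⟨fun _ ha => csc_gen ha, csc_bot, fun _ ha _ hb => csc_sup ha hb,
    fun _ ha => csc_compl ha⟩

lemma csc_finset_inf {s : Set B} {ι : Type*} (F : Finset ι) (f : ι → B)
    (hf : ∀ i ∈ F, f i ∈ cSubalgClosure s) : F.inf f ∈ cSubalgClosure s := by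
  classical
  induction F using Finset.induction_on with
  | empty =>
    have : (⊤ : B) ∈ cSubalgClosure s := by
      have := csc_compl (csc_bot (s := s)); simpa using this
    simpa using this
  | @insert i F hni ih =>
    rw [Finset.inf_insert]
    exact csc_inf (hf i (Finset.mem_insert_self i F))
      (ih fun j hj => hf j (Finset.mem_insert_of_mem hj))


section
variable (x : T → B) [DecidableEq T]

def mint (F G : Finset T) : B := F.inf x ⊓ G.inf (fun η => (x η)ᶜ)

/-- `a` is decided by every full minterm over `H`. -/
def Decided (a : B) (H : Finset T) : Prop :=
  ∀ F ⊆ H, mint x F (H \ F) ≤ a ∨ mint x F (H \ F) ≤ aᶜ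

variable {x}

lemma mint_mono {F G F' G' : Finset T} (hF : F ⊆ F') (hG : G ⊆ G') :
    mint x F' G' ≤ mint x F G :=
  inf_le_inf (Finset.inf_mono hF) (Finset.inf_mono hG)

lemma decided_compl {a : B} {H : Finset T} (ha : Decided x a H) : Decided x aᶜ H := by
  intro F hF
  rcases ha F hF with h | h
  · right; simpa using h
  · left; exact h

lemma decided_restrict {a : B} {H H' : Finset T} (hsub : H ⊆ H')
    (ha : Decided x a H) {F : Finset T} (hF : F ⊆ H') :
    mint x F (H' \ F) ≤ a ∨ mint x F (H' \ F) ≤ aᶜ := by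
  have hle : mint x F (H' \ F) ≤ mint x (F ∩ H) (H \ (F ∩ H)) := by
    apply mint_mono Finset.inter_subset_left
    have h1 : H \ (F ∩ H) = H \ F := by
      rw [Finset.inter_comm, Finset.sdiff_inter_self_left]
    rw [h1]
    exact Finset.sdiff_subset_sdiff hsub (le_refl F)
  rcases ha (F ∩ H) Finset.inter_subset_right with h | h
  · exact Or.inl (hle.trans h)
  · exact Or.inr (hle.trans h)

lemma decided_sup {a b : B} {H₁ H₂ : Finset T}
    (ha : Decided x a H₁) (hb : Decided x b H₂) : Decided x (a ⊔ b) (H₁ ∪ H₂) := by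
  intro F hF
  rcases decided_restrict Finset.subset_union_left ha hF with h | h
  · exact Or.inl (h.trans le_sup_left)
  rcases decided_restrict Finset.subset_union_right hb hF with h' | h'
  · exact Or.inl (h'.trans le_sup_right)
  · right
    rw [compl_sup]
    exact le_inf h h'

/-- Every element of the subalgebra generated by `x '' U` is decided by some
finite `H ⊆ U`. -/
lemma exists_decided {U : Set T} {c : B}
    (hc : c ∈ subalgClosure (x '' U)) : ∃ H : Finset T, ↑H ⊆ U ∧ Decided x c H := by
  have : c ∈ {a : B | ∃ H : Finset T, ↑H ⊆ U ∧ Decided x a H} := by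
    refine sc_subset ?_ hc
    refine ⟨?_, ⟨∅, by simp, ?_⟩, ?_, ?_⟩
    · rintro _ ⟨η, hη, rfl⟩
      refine ⟨{η}, by simpa using hη, ?_⟩
      intro F hF
      rcases Finset.subset_singleton_iff.mp hF with rfl | rfl
      · right
        simp [mint]
      · left
        simp [mint]
    · intro F _
      right
      simp
    · rintro a ⟨H₁, hH₁, ha⟩ b ⟨H₂, hH₂, hb⟩
      exact ⟨H₁ ∪ H₂, by simp [Finset.coe_union, Set.union_subset_iff, hH₁, hH₂],
        decided_sup ha hb⟩
    · rintro a ⟨H, hH, ha⟩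
      exact ⟨H, hH, decided_compl ha⟩
  exact this

/-- The full minterms over `H` sup to `⊤`. -/
lemma sup_minterms_eq_top (x' : T → B) (H : Finset T) :
    H.powerset.sup (fun F => mint x' F (H \ F)) = ⊤ := by
  induction H using Finset.induction_on with
  | empty => simp [mint]
  | @insert a s hna ih =>
    apply top_unique
    rw [← ih]
    apply Finset.sup_le
    intro F hF
    rw [Finset.mem_powerset] at hF
    have haF : a ∉ F := fun h => hna (hF h)
    have h1 : insert a s \ insert a F = s \ F := by
      ext b
      simp only [Finset.mem_sdiff, Finset.mem_insert]
      constructor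
      · rintro ⟨hb1 | hb1, hb2⟩
        · exact absurd (Or.inl hb1) hb2
        · exact ⟨hb1, fun h => hb2 (Or.inr h)⟩
      · rintro ⟨hb1, hb2⟩
        exact ⟨Or.inr hb1, fun h => by
          rcases h with rfl | h
          · exact hna hb1
          · exact hb2 h⟩
    have h2 : insert a s \ F = insert a (s \ F) := by
      rw [Finset.insert_sdiff_of_notMem _ haF]
    have expand : mint x' F (s \ F) =
        mint x' F (s \ F) ⊓ x' a ⊔ mint x' F (s \ F) ⊓ (x' a)ᶜ := by
      rw [← inf_sup_left, sup_compl_eq_top, inf_top_eq]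
    rw [expand]
    apply sup_le
    · have he : mint x' F (s \ F) ⊓ x' a = mint x' (insert a F) (insert a s \ insert a F) := by
        rw [h1, mint, mint, Finset.inf_insert, inf_right_comm,
          inf_comm (F.inf x') (x' a)]
      rw [he]
      exact Finset.le_sup (f := fun F => mint x' F (insert a s \ F))
        (Finset.mem_powerset.mpr (Finset.insert_subset_insert a hF))
    · have he : mint x' F (s \ F) ⊓ (x' a)ᶜ = mint x' F (insert a s \ F) := by
        rw [h2, mint, mint, Finset.inf_insert, inf_right_comm, inf_assoc]
      rw [he]
      exact Finset.le_sup (f := fun F => mint x' F (insert a s \ F))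
        (Finset.mem_powerset.mpr (hF.trans (Finset.subset_insert a s)))

/-- Every nonzero element of the subalgebra generated by `x '' U` has a nonzero
minterm over `U` below it. -/
lemma exists_minterm_le {U : Set T} {c : B}
    (hc : c ∈ subalgClosure (x '' U)) (hne : c ≠ ⊥) :
    ∃ F G : Finset T, ↑F ⊆ U ∧ ↑G ⊆ U ∧ Disjoint F G ∧ mint x F G ≤ c := by
  obtain ⟨H, hHU, hdec⟩ := exists_decided hc
  have htop := sup_minterms_eq_top x H
  have hc2 : c = H.powerset.sup (fun F => mint x F (H \ F) ⊓ c) := by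
    rw [← Finset.sup_inf_distrib_right, htop, top_inf_eq]
  have : ∃ F ∈ H.powerset, mint x F (H \ F) ⊓ c ≠ ⊥ := by
    by_contra h
    push_neg at h
    apply hne
    rw [hc2]
    exact le_bot_iff.mp (Finset.sup_le fun F hF => le_of_eq (h F hF))
  obtain ⟨F, hFmem, hFne⟩ := this
  rw [Finset.mem_powerset] at hFmem
  refine ⟨F, H \ F, fun t ht => hHU (hFmem ht), fun t ht => hHU (Finset.mem_sdiff.mp ht).1,
    Finset.disjoint_sdiff, ?_⟩
  rcases hdec F hFmem with h | h
  · exact h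
  · exact absurd (disjoint_iff.mp (le_compl_iff_disjoint_right.mp h)) hFne

/-- Minterms over disjoint index sets combine to a nonzero element. -/
lemma mint_inf_mint_ne_bot (hx : Indep x) {F₁ G₁ F₂ G₂ : Finset T}
    (h₁ : Disjoint F₁ G₁) (h₂ : Disjoint F₂ G₂)
    (hd : Disjoint (F₁ ∪ G₁) (F₂ ∪ G₂)) :
    mint x F₁ G₁ ⊓ mint x F₂ G₂ ≠ ⊥ := by
  have key : mint x (F₁ ∪ F₂) (G₁ ∪ G₂) = mint x F₁ G₁ ⊓ mint x F₂ G₂ := by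
    rw [mint, mint, mint, Finset.inf_union, Finset.inf_union]
    rw [inf_assoc, inf_assoc]
    congr 1
    rw [← inf_assoc, ← inf_assoc]
    congr 1
    rw [inf_comm]
  rw [← key]
  apply hx
  rw [Finset.disjoint_union_left, Finset.disjoint_union_right, Finset.disjoint_union_right]
  refine ⟨⟨h₁, ?_⟩, ?_, h₂⟩
  · exact hd.mono Finset.subset_union_left Finset.subset_union_right
  · exact (hd.mono Finset.subset_union_right Finset.subset_union_left).symm

end

section
variable {x : T → B} [DecidableEq T]

/-- Nonzero elements of the subalgebras over `S` and over `Sᶜ` always meet. -/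
lemma cross_ne_bot (hx : Indep x) {S : Set T} {c d : B}
    (hc : c ∈ subalgClosure (x '' S)) (hd : d ∈ subalgClosure (x '' Sᶜ))
    (hcne : c ≠ ⊥) (hdne : d ≠ ⊥) : c ⊓ d ≠ ⊥ := by
  obtain ⟨F₁, G₁, hF₁, hG₁, hdisj₁, hm₁⟩ := exists_minterm_le hc hcne
  obtain ⟨F₂, G₂, hF₂, hG₂, hdisj₂, hm₂⟩ := exists_minterm_le hd hdne
  have hcross : Disjoint (F₁ ∪ G₁) (F₂ ∪ G₂) := by
    rw [Finset.disjoint_left]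
    intro a ha ha'
    have h1 : a ∈ S := by
      rcases Finset.mem_union.mp ha with h | h
      · exact hF₁ h
      · exact hG₁ h
    have h2 : a ∈ Sᶜ := by
      rcases Finset.mem_union.mp ha' with h | h
      · exact hF₂ h
      · exact hG₂ h
    exact h2 h1
  intro h
  apply mint_inf_mint_ne_bot hx hdisj₁ hdisj₂ hcross
  exact le_bot_iff.mp ((inf_le_inf hm₁ hm₂).trans (le_of_eq h))

variable (x) in
/-- The inductive invariant: `a` interacts with the subalgebra over `Sᶜ` only trivially,
relative to the subalgebra over `S`. -/
def Pinv (S : Set T) (a : B) : Prop :=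
  ∀ c ∈ subalgClosure (x '' S), ∀ d ∈ subalgClosure (x '' Sᶜ), d ≠ ⊥ →
    (c ⊓ d ⊓ a = ⊥ → c ⊓ a = ⊥) ∧ (c ⊓ d ⊓ aᶜ = ⊥ → c ⊓ aᶜ = ⊥)

lemma pinv_of_mem_csc (hx : Indep x)
    (hdense : ∀ b : B, b ≠ ⊥ → ∃ c ∈ subalgClosure (Set.range x), c ≠ ⊥ ∧ c ≤ b)
    (S : Set T) : ∀ a ∈ cSubalgClosure (x '' S), Pinv x S a := by
  intro a ha
  refine csc_subset (S' := {a | Pinv x S a}) ⟨?_, ?_, ?_⟩ ha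
  · -- generators
    rintro _ ⟨η, hη, rfl⟩ c hc d hd hdne
    constructor
    · intro h
      by_contra hne
      have : c ⊓ x η ⊓ d ≠ ⊥ :=
        cross_ne_bot hx (sc_inf hc (sc_gen ⟨η, hη, rfl⟩)) hd hne hdne
      apply this
      rw [inf_right_comm] at h ⊢
      rwa [inf_right_comm] at h
    · intro h
      by_contra hne
      have : c ⊓ (x η)ᶜ ⊓ d ≠ ⊥ :=
        cross_ne_bot hx (sc_inf hc (sc_compl (sc_gen ⟨η, hη, rfl⟩))) hd hne hdne
      apply this
      rwa [inf_right_comm] at h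
  · -- sSup
    intro t ht c hc d hd hdne
    constructor
    · intro h
      have hall : ∀ a ∈ t, c ⊓ a = ⊥ := by
        intro a hat
        apply ((ht hat) c hc d hd hdne).1
        exact le_bot_iff.mp ((inf_le_inf le_rfl (le_sSup hat)).trans (le_of_eq h))
      rw [inf_sSup_eq]
      exact le_bot_iff.mp (iSup₂_le fun a hat => le_of_eq (hall a hat))
    · intro h
      by_contra hb
      obtain ⟨e, he, hene, heb⟩ := hdense (c ⊓ (sSup t)ᶜ) hb
      rw [← Set.image_univ] at he
      obtain ⟨F, G, _, _, hdisj, hm⟩ := exists_minterm_le he hene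
      classical
      set F₁ := F.filter (· ∈ S) with hF₁
      set F₂ := F.filter (· ∉ S) with hF₂
      set G₁ := G.filter (· ∈ S) with hG₁
      set G₂ := G.filter (· ∉ S) with hG₂
      have hFsplit : F = F₁ ∪ F₂ := (Finset.filter_union_filter_not_eq _ F).symm
      have hGsplit : G = G₁ ∪ G₂ := (Finset.filter_union_filter_not_eq _ G).symm
      have hmsplit : mint x F G = mint x F₁ G₁ ⊓ mint x F₂ G₂ := by
        rw [mint, mint, mint]
        conv_lhs => rw [hFsplit, hGsplit]
        rw [Finset.inf_union, Finset.inf_union]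
        rw [inf_assoc, inf_assoc]
        congr 1
        rw [← inf_assoc, ← inf_assoc]
        congr 1
        rw [inf_comm]
      have hmS : mint x F₁ G₁ ∈ subalgClosure (x '' S) := by
        apply sc_inf
        · apply sc_finset_inf
          intro i hi
          exact sc_gen ⟨i, (Finset.mem_filter.mp hi).2, rfl⟩
        · apply sc_finset_inf
          intro i hi
          exact sc_compl (sc_gen ⟨i, (Finset.mem_filter.mp hi).2, rfl⟩)
      have hmSc : mint x F₂ G₂ ∈ subalgClosure (x '' Sᶜ) := by
        apply sc_inf
        · apply sc_finset_inf
          intro i hi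
          exact sc_gen ⟨i, (Finset.mem_filter.mp hi).2, rfl⟩
        · apply sc_finset_inf
          intro i hi
          exact sc_compl (sc_gen ⟨i, (Finset.mem_filter.mp hi).2, rfl⟩)
      -- the minterm lies below c and misses sSup t
      have hmc : mint x F G ≤ c := hm.trans (heb.trans inf_le_left)
      have hmt : mint x F G ⊓ sSup t = ⊥ := by
        apply le_bot_iff.mp
        calc mint x F G ⊓ sSup t ≤ (sSup t)ᶜ ⊓ sSup t :=
              inf_le_inf ((hm.trans heb).trans inf_le_right) le_rfl
          _ = ⊥ := by rw [inf_comm, inf_compl_eq_bot]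
      have hmne : mint x F G ≠ ⊥ := hx F G hdisj
      have hmScne : mint x F₂ G₂ ≠ ⊥ := by
        intro hbb
        apply hmne
        rw [hmsplit, hbb, inf_bot_eq]
      have hcmS : c ⊓ mint x F₁ G₁ ≠ ⊥ := by
        intro hbb
        apply hmne
        apply le_bot_iff.mp
        calc mint x F G ≤ c ⊓ mint x F G := le_inf hmc le_rfl
          _ ≤ c ⊓ mint x F₁ G₁ := inf_le_inf le_rfl (by rw [hmsplit]; exact inf_le_left)
          _ = ⊥ := hbb
      -- apply part 1 of each a ∈ t with c := c ⊓ m₁, d := m₂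
      have hall : ∀ a ∈ t, (c ⊓ mint x F₁ G₁) ⊓ a = ⊥ := by
        intro a hat
        apply ((ht hat) (c ⊓ mint x F₁ G₁) (sc_inf hc hmS) (mint x F₂ G₂) hmSc hmScne).1
        apply le_bot_iff.mp
        calc c ⊓ mint x F₁ G₁ ⊓ mint x F₂ G₂ ⊓ a
            ≤ mint x F₁ G₁ ⊓ mint x F₂ G₂ ⊓ a := by
              apply inf_le_inf _ le_rfl
              rw [inf_assoc]
              exact inf_le_right
          _ = mint x F G ⊓ a := by rw [hmsplit]
          _ ≤ mint x F G ⊓ sSup t := inf_le_inf le_rfl (le_sSup hat)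
          _ = ⊥ := hmt
      have hsup : (c ⊓ mint x F₁ G₁) ⊓ sSup t = ⊥ := by
        rw [inf_sSup_eq]
        exact le_bot_iff.mp (iSup₂_le fun a hat => le_of_eq (hall a hat))
      -- but c ⊓ m₁ ⊓ d is nonzero and lies below sSup t
      have hcross : c ⊓ mint x F₁ G₁ ⊓ d ≠ ⊥ :=
        cross_ne_bot hx (sc_inf hc hmS) hd hcmS hdne
      apply hcross
      apply le_bot_iff.mp
      have hcd : c ⊓ d ≤ sSup t := by
        rw [← sdiff_eq_bot_iff, sdiff_eq]
        exact h
      calc c ⊓ mint x F₁ G₁ ⊓ d ≤ (c ⊓ mint x F₁ G₁) ⊓ (sSup t) := by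
            apply le_inf (inf_le_left)
            calc c ⊓ mint x F₁ G₁ ⊓ d ≤ c ⊓ d := by
                  apply inf_le_inf _ le_rfl
                  exact inf_le_left
              _ ≤ sSup t := hcd
        _ = ⊥ := hsup
  · -- complement
    intro a hPa c hc d hd hdne
    obtain ⟨h1, h2⟩ := hPa c hc d hd hdne
    refine ⟨h2, ?_⟩
    rw [compl_compl]
    exact h1

/-- Key corollary: a nonzero element of the complete subalgebra over `S` meets every
nonzero element of the subalgebra over `Sᶜ`. -/
lemma csc_meets (hx : Indep x)
    (hdense : ∀ b : B, b ≠ ⊥ → ∃ c ∈ subalgClosure (Set.range x), c ≠ ⊥ ∧ c ≤ b)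
    {S : Set T} {a d : B} (ha : a ∈ cSubalgClosure (x '' S))
    (hd : d ∈ subalgClosure (x '' Sᶜ)) (hdne : d ≠ ⊥) (hane : a ≠ ⊥) :
    a ⊓ d ≠ ⊥ := by
  intro h
  apply hane
  have := (pinv_of_mem_csc hx hdense S a ha ⊤ sc_top d hd hdne).1
  simp only [top_inf_eq] at this
  apply this
  rwa [inf_comm] at h

end
end Proj

/-- In (the completion of) the free Boolean algebra on generators `x : T → B`:
if `z = ⨅ ℓ τ_ℓ ⊓ ⨅ ℓ σ_ℓ ≠ ⊥`, where each `τ_ℓ` lies in the subalgebra generated by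
`{x_η : η ∈ S}` and each `σ_ℓ ∈ {x_{ν_ℓ}, (x_{ν_ℓ})ᶜ}` with the `ν_ℓ ∈ T \ S` distinct,
then `pr_A(z) = ⨅ ℓ τ_ℓ`, where `A` is the complete subalgebra generated by
`{x_η : η ∈ S}`. -/
theorem projection_of_free_part {n m : ℕ} (x : T → B) (hx : Indep x)
    (hdense : ∀ b : B, b ≠ ⊥ → ∃ c ∈ subalgClosure (Set.range x), c ≠ ⊥ ∧ c ≤ b)
    (S : Set T) (τ : Fin n → B) (hτ : ∀ ℓ, τ ℓ ∈ subalgClosure (x '' S))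
    (ν : Fin m → T) (hνinj : Function.Injective ν) (hνS : ∀ ℓ, ν ℓ ∉ S)
    (σ : Fin m → B) (hσ : ∀ ℓ, σ ℓ = x (ν ℓ) ∨ σ ℓ = (x (ν ℓ))ᶜ)
    (hne : Finset.univ.inf τ ⊓ Finset.univ.inf σ ≠ ⊥) :
    prj (cSubalgClosure (x '' S)) (Finset.univ.inf τ ⊓ Finset.univ.inf σ) =
      Finset.univ.inf τ := by
  classical
  set T₀ : B := Finset.univ.inf τ with hT₀
  set Sig : B := Finset.univ.inf σ with hSig
  have hT₀mem : T₀ ∈ cSubalgClosure (x '' S) :=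
    Proj.csc_finset_inf _ _ fun ℓ _ => Proj.sc_subset_csc (hτ ℓ)
  have hSigmem : Sig ∈ subalgClosure (x '' Sᶜ) := by
    apply Proj.sc_finset_inf
    intro ℓ _
    rcases hσ ℓ with h | h
    · rw [h]; exact Proj.sc_gen ⟨ν ℓ, hνS ℓ, rfl⟩
    · rw [h]; exact Proj.sc_compl (Proj.sc_gen ⟨ν ℓ, hνS ℓ, rfl⟩)
  have hSigne : Sig ≠ ⊥ := by
    intro h
    apply hne
    rw [h, inf_bot_eq]
  apply le_antisymm
  · exact sInf_le ⟨hT₀mem, inf_le_left⟩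
  · apply le_sInf
    rintro a ⟨haA, hza⟩
    have hb : T₀ ⊓ aᶜ = ⊥ := by
      by_contra hbne
      apply Proj.csc_meets hx hdense (Proj.csc_inf hT₀mem (Proj.csc_compl haA)) hSigmem hSigne hbne
      apply le_bot_iff.mp
      calc T₀ ⊓ aᶜ ⊓ Sig ≤ a ⊓ aᶜ := by
            apply le_inf
            · calc T₀ ⊓ aᶜ ⊓ Sig ≤ T₀ ⊓ Sig := by
                    rw [inf_right_comm]
                    exact inf_le_left
                _ ≤ a := hza
            · exact inf_le_left.trans inf_le_right
        _ = ⊥ := inf_compl_eq_bot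
    rw [← sdiff_eq_bot_iff, sdiff_eq]
    exact hb
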